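/- arXiv:1012.3654 — 12 statements merged into one kernel-verified Lean document; each statement's English description precedes it below -/
import Mathlib

section
/- Let m, k be nonnegative integers and define a_1 = 1, a_{n+1} = Σ_{i=1}^{n} (m(n-i)+k) a_i. Then a_2 = k, a_3 = m + k + k^2, and for all n ≥ 2, a_{n+2} = (k+2) a_{n+1} + (m-k-1) a_n. -/
theorem stmt_2 (m k : ℕ) (a : ℕ → ℤ) (h1 : a 1 = 1)
    (hrec : ∀ n ≥ 1, a (n + 1) = ∑ i ∈ Finset.Icc 1 n, ((m * (n - i) + k : ℕ) : ℤ) * a i) :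
    a 2 = k ∧ a 3 = m + k + k ^ 2 ∧
      ∀ n ≥ 2, a (n + 2) = ((k : ℤ) + 2) * a (n + 1) + ((m : ℤ) - k - 1) * a n := by
  have h2 : a 2 = k := by
    have h := hrec 1 le_rfl
    simp [h1] at h
    simpa using h
  have h3 : a 3 = m + k + k ^ 2 := by
    have h := hrec 2 (by norm_num)
    rw [show Finset.Icc 1 2 = {1, 2} from rfl] at h
    simp [h1, h2] at h
    rw [h]; ring
  have key : ∀ n ≥ 1, a (n + 2) =
      ((k : ℤ) + 1) * a (n + 1) + (m : ℤ) * ∑ i ∈ Finset.Icc 1 n, a i := by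
    intro n hn
    have h := hrec (n + 1) (by omega)
    rw [show Finset.Icc 1 (n + 1) = insert (n + 1) (Finset.Icc 1 n) by
        ext x; simp [Finset.mem_Icc]; omega] at h
    rw [Finset.sum_insert (by simp)] at h
    have hsum : ∑ i ∈ Finset.Icc 1 n, ((m * (n + 1 - i) + k : ℕ) : ℤ) * a i
        = (∑ i ∈ Finset.Icc 1 n, ((m * (n - i) + k : ℕ) : ℤ) * a i)
          + (m : ℤ) * ∑ i ∈ Finset.Icc 1 n, a i := by
      rw [Finset.mul_sum, ← Finset.sum_add_distrib]
      apply Finset.sum_congr rfl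
      intro i hi
      simp only [Finset.mem_Icc] at hi
      have : n + 1 - i = (n - i) + 1 := by omega
      rw [this]
      push_cast
      ring
    rw [hsum, ← hrec n hn] at h
    rw [h]
    simp
    ring
  refine ⟨h2, h3, ?_⟩
  intro n hn
  obtain ⟨j, rfl⟩ : ∃ j, n = j + 1 := ⟨n - 1, by omega⟩
  have k1 := key (j + 1) (by omega)
  have k2 := key j (by omega)
  have hS : ∑ i ∈ Finset.Icc 1 (j + 1), a i = (∑ i ∈ Finset.Icc 1 j, a i) + a (j + 1) := by
    rw [Finset.sum_Icc_succ_top (by omega)]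
  rw [hS] at k1
  have : a (j + 2) - (k : ℤ) * a (j + 1) - a (j + 1) = (m : ℤ) * ∑ i ∈ Finset.Icc 1 j, a i := by
    linarith [k2]
  rw [k1]
  linarith [this]
end

section
/- Define a_1 = 1, a_{n+1} = Σ_{i=1}^{n} (n-i+1) a_i. Then a_{n+1} = F_{2n} for all n ≥ 1, where F denotes the Fibonacci numbers. -/
theorem stmt_4 (a : ℕ → ℕ) (h1 : a 1 = 1)
    (hrec : ∀ n ≥ 1, a (n + 1) = ∑ i ∈ Finset.Icc 1 n, (n - i + 1) * a i) :
    ∀ n ≥ 1, a (n + 1) = Nat.fib (2 * n) := by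
  have key : ∀ n ≥ 1, a (n + 1) = Nat.fib (2 * n) ∧
      (∑ i ∈ Finset.Icc 1 n, a i) = Nat.fib (2 * n - 1) := by
    intro n hn
    induction n, hn using Nat.le_induction with
    | base =>
      constructor
      · rw [hrec 1 (by norm_num)]
        simp [h1]
      · simp [h1]
    | succ n hn ih =>
      obtain ⟨ih1, ih2⟩ := ih
      have hsum : (∑ i ∈ Finset.Icc 1 (n + 1), a i) = Nat.fib (2 * (n + 1) - 1) := by
        rw [Finset.sum_Icc_succ_top (by omega), ih2, ih1]
        have h2 : 2 * (n + 1) - 1 = (2 * n - 1) + 2 := by omega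
        rw [h2, Nat.fib_add_two]
        have h3 : 2 * n - 1 + 1 = 2 * n := by omega
        rw [h3]
      refine ⟨?_, hsum⟩
      rw [hrec (n + 1) (by omega), Finset.sum_Icc_succ_top (by omega : 1 ≤ n + 1)]
      have e1 : (∑ i ∈ Finset.Icc 1 n, (n + 1 - i + 1) * a i)
          = (∑ i ∈ Finset.Icc 1 n, (n - i + 1) * a i) + ∑ i ∈ Finset.Icc 1 n, a i := by
        rw [← Finset.sum_add_distrib]
        apply Finset.sum_congr rfl
        intro i hi
        simp only [Finset.mem_Icc] at hi
        have : n + 1 - i + 1 = (n - i + 1) + 1 := by omega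
        rw [this]; ring
      rw [e1, ← hrec n hn, ih1, ih2]
      simp only [Nat.sub_self, Nat.zero_add, Nat.one_mul]
      have h3 : 2 * n = (2 * n - 1) + 1 := by omega
      have h4 : 2 * (n + 1) = (2 * n - 1) + 1 + 1 + 1 := by omega
      rw [h3, h4, Nat.fib_add_two, Nat.fib_add_two]
      simp only [Nat.add_sub_cancel]
      ring
  intro n hn
  exact (key n hn).1
end

section
/- Let m ≥ 1 and define a_1 = 1, a_{n+1} = Σ_{i=1}^{n} (m(n-i) + m - 1) a_i. Then a_2 = m-1 and a_{n+1} = m^2 (m+1)^{n-2} for all n ≥ 2. -/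
theorem stmt_5 (m : ℕ) (hm : m ≥ 1) (a : ℕ → ℕ) (h1 : a 1 = 1)
    (hrec : ∀ n ≥ 1, a (n + 1) = ∑ i ∈ Finset.Icc 1 n, (m * (n - i) + (m - 1)) * a i) :
    a 2 = m - 1 ∧ ∀ n ≥ 2, a (n + 1) = m ^ 2 * (m + 1) ^ (n - 2) := by
  obtain ⟨k, rfl⟩ : ∃ k, m = k + 1 := ⟨m - 1, by omega⟩
  simp only [Nat.add_sub_cancel] at *
  set m := k + 1 with hmdef
  have h2 : a 2 = k := by
    have := hrec 1 (le_refl 1)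
    simpa [h1, hmdef] using this
  have key : ∀ n ≥ 1, a (n + 2) = m * a (n + 1) + m * ∑ i ∈ Finset.Icc 1 n, a i := by
    intro n hn
    have h := hrec (n + 1) (by omega)
    rw [Finset.sum_Icc_succ_top (by omega : 1 ≤ n + 1)] at h
    have hsplit : ∑ i ∈ Finset.Icc 1 n, (m * (n + 1 - i) + k) * a i
        = (∑ i ∈ Finset.Icc 1 n, (m * (n - i) + k) * a i)
          + m * ∑ i ∈ Finset.Icc 1 n, a i := by
      rw [Finset.mul_sum, ← Finset.sum_add_distrib]
      apply Finset.sum_congr rfl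
      intro i hi
      simp only [Finset.mem_Icc] at hi
      have hni : n + 1 - i = (n - i) + 1 := by omega
      rw [hni]; ring
    rw [hsplit, ← hrec n hn] at h
    -- h : a (n+2) = a (n+1) + m * Σ + (m * 0 + k) * a (n+1)
    simp only [Nat.sub_self, Nat.mul_zero, Nat.zero_add] at h
    rw [h, hmdef]; ring
  have base : a 3 = m ^ 2 := by
    have := key 1 (le_refl 1)
    simp [h1, h2, hmdef] at this ⊢
    rw [this]; ring
  have step : ∀ n ≥ 1, a (n + 3) = (m + 1) * a (n + 2) := by
    intro n hn
    have h1' := key n hn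
    have h2' := key (n + 1) (by omega)
    rw [Finset.sum_Icc_succ_top (by omega : 1 ≤ n + 1), Nat.mul_add] at h2'
    have : a (n + 1 + 2) = m * a (n + 1 + 1) + (m * a (n + 1) + m * ∑ i ∈ Finset.Icc 1 n, a i) := by
      rw [h2']; ring
    rw [← h1'] at this
    rw [show n + 3 = n + 1 + 2 by ring, this]
    ring
  refine ⟨h2, ?_⟩
  intro n hn
  induction n, hn using Nat.le_induction with
  | base => simpa using base
  | succ n hn ih =>
    have hs := step (n - 1) (by omega)
    rw [show n - 1 + 3 = n + 1 + 1 by omega, show n - 1 + 2 = n + 1 by omega] at hs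
    rw [hs, ih, show n + 1 - 2 = (n - 2) + 1 by omega]
    ring
end

section
/- Let k, m, p be rational numbers such that b_i = k i^2 + m i + p is a nonnegative integer for all i ≥ 1, and define a_1 = 1, a_{n+1} = Σ_{i=1}^{n} b_{n+1-i} a_i. Then for all n ≥ 3, a_{n+2} = (k+m+p+3) a_{n+1} + (k-m-2p-3) a_n + (p+1) a_{n-1}. -/
theorem stmt_6 (k m p : ℚ)
    (hb : ∀ i : ℕ, i ≥ 1 → ∃ z : ℕ, k * (i : ℚ) ^ 2 + m * i + p = z)
    (a : ℕ → ℚ) (h1 : a 1 = 1)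
    (hrec : ∀ n ≥ 1, a (n + 1) =
      ∑ i ∈ Finset.Icc 1 n, (k * ((n + 1 - i : ℕ) : ℚ) ^ 2 + m * ((n + 1 - i : ℕ) : ℚ) + p) * a i) :
    ∀ n ≥ 3, a (n + 2) = (k + m + p + 3) * a (n + 1) + (k - m - 2 * p - 3) * a n + (p + 1) * a (n - 1) := by
  intro n hn
  obtain ⟨l, rfl⟩ : ∃ l, n = l + 3 := ⟨n - 3, by omega⟩
  have e1 := hrec (l+1) (by omega)
  have e2 := hrec (l+2) (by omega)
  have e3 := hrec (l+3) (by omega)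
  have e4 := hrec (l+4) (by omega)
  rw [show l+2 = (l+1)+1 from rfl, Finset.sum_Icc_succ_top (by omega)] at e2
  rw [show l+3 = (l+2)+1 from rfl, Finset.sum_Icc_succ_top (by omega),
      show l+2 = (l+1)+1 from rfl, Finset.sum_Icc_succ_top (by omega)] at e3
  rw [show l+4 = (l+3)+1 from rfl, Finset.sum_Icc_succ_top (by omega),
      show l+3 = (l+2)+1 from rfl, Finset.sum_Icc_succ_top (by omega),
      show l+2 = (l+1)+1 from rfl, Finset.sum_Icc_succ_top (by omega)] at e4
  simp only [show (l+1)+1 = l+2 from rfl, show (l+2)+1 = l+3 from rfl,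
    show (l+3)+1 = l+4 from rfl, show l+1+1 = l+2 from rfl, show l+2+1 = l+3 from rfl,
    show l+3+1 = l+4 from rfl, show l+4+1 = l+5 from rfl,
    show l+3-(l+2) = 1 from by omega, show l+4-(l+2) = 2 from by omega,
    show l+4-(l+3) = 1 from by omega, show l+5-(l+2) = 3 from by omega,
    show l+5-(l+3) = 2 from by omega, show l+5-(l+4) = 1 from by omega] at e1 e2 e3 e4
  have hS3 : (∑ i ∈ Finset.Icc 1 (l+1),
        (k * ((l+5-i : ℕ) : ℚ) ^ 2 + m * ((l+5-i : ℕ) : ℚ) + p) * a i)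
      = 3 * (∑ i ∈ Finset.Icc 1 (l+1),
          (k * ((l+4-i : ℕ) : ℚ) ^ 2 + m * ((l+4-i : ℕ) : ℚ) + p) * a i)
        - 3 * (∑ i ∈ Finset.Icc 1 (l+1),
          (k * ((l+3-i : ℕ) : ℚ) ^ 2 + m * ((l+3-i : ℕ) : ℚ) + p) * a i)
        + (∑ i ∈ Finset.Icc 1 (l+1),
          (k * ((l+2-i : ℕ) : ℚ) ^ 2 + m * ((l+2-i : ℕ) : ℚ) + p) * a i) := by
    rw [Finset.mul_sum, Finset.mul_sum, ← Finset.sum_sub_distrib, ← Finset.sum_add_distrib]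
    refine Finset.sum_congr rfl fun i hi => ?_
    simp only [Finset.mem_Icc] at hi
    rw [show l+5-i = (l+2-i)+3 from by omega, show l+4-i = (l+2-i)+2 from by omega,
        show l+3-i = (l+2-i)+1 from by omega]
    push_cast
    ring
  simp only [show l+3+2 = l+5 from rfl, show l+3+1 = l+4 from rfl, show l+3-1 = l+2 from rfl]
  rw [e4, hS3, e3, e2, e1]
  ring
end

section
/- Define a_1 = 1, a_{n+1} = Σ_{i=1}^{n} ((n+1-i)^2 - 1) a_i. Then a_2 = 0, a_3 = 3, and a_{n+1} = 8 · 3^{n-3} for all n ≥ 3. -/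
open Finset

theorem stmt_7 (a : ℕ → ℕ) (h1 : a 1 = 1)
    (hrec : ∀ n ≥ 1, a (n + 1) = ∑ i ∈ Finset.Icc 1 n, ((n + 1 - i) ^ 2 - 1) * a i) :
    a 2 = 0 ∧ a 3 = 3 ∧ ∀ n ≥ 3, a (n + 1) = 8 * 3 ^ (n - 3) := by
  have h2 : a 2 = 0 := by
    have h := hrec 1 le_rfl
    simp [Finset.Icc_self] at h
    simpa [h1] using h
  have h3 : a 3 = 3 := by
    have h := hrec 2 (by norm_num)
    rw [show Finset.Icc 1 2 = {1, 2} from by decide] at h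
    simp [Finset.sum_insert, h1, h2] at h
    simpa using h
  have habs : ∀ m ≥ 1, a (m + 1) + ∑ i ∈ Icc 1 m, a i
      = ∑ i ∈ Icc 1 m, (m + 1 - i) ^ 2 * a i := by
    intro m hm
    rw [hrec m hm, ← Finset.sum_add_distrib]
    refine Finset.sum_congr rfl fun i hi => ?_
    simp only [Finset.mem_Icc] at hi
    have hc : 0 < (m + 1 - i) ^ 2 := pow_pos (by omega) 2
    rw [Nat.sub_mul, one_mul, Nat.sub_add_cancel (Nat.le_mul_of_pos_left _ hc)]
  have key : ∀ n, 3 ≤ n →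
      (∑ i ∈ Icc 1 n, a i = 4 * 3 ^ (n - 3)) ∧
      (∑ i ∈ Icc 1 n, (n + 1 - i) * a i = 6 * 3 ^ (n - 3)) ∧
      (∑ i ∈ Icc 1 n, (n + 1 - i) ^ 2 * a i = 12 * 3 ^ (n - 3)) ∧
      a (n + 1) = 8 * 3 ^ (n - 3) := by
    intro n hn
    induction n, hn using Nat.le_induction with
    | base =>
      rw [show Finset.Icc 1 3 = {1, 2, 3} from by decide]
      have hs0 : ∑ i ∈ ({1, 2, 3} : Finset ℕ), a i = 4 := by
        simp [Finset.sum_insert, h1, h2, h3]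
      have hs2 : ∑ i ∈ ({1, 2, 3} : Finset ℕ), (3 + 1 - i) ^ 2 * a i = 12 := by
        simp [Finset.sum_insert, h1, h2, h3]
      have ha4 := habs 3 (by norm_num)
      rw [show Finset.Icc 1 3 = {1, 2, 3} from by decide] at ha4
      refine ⟨hs0, ?_, hs2, by omega⟩
      simp [Finset.sum_insert, h1, h2, h3]
    | succ n hn ih =>
      obtain ⟨hS0, hS1, hS2, ha⟩ := ih
      have hpow : (3 : ℕ) ^ (n + 1 - 3) = 3 * 3 ^ (n - 3) := by
        rw [show n + 1 - 3 = (n - 3) + 1 from by omega, pow_succ]; ring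
      have hS0' : ∑ i ∈ Icc 1 (n + 1), a i = 4 * 3 ^ (n + 1 - 3) := by
        rw [Finset.sum_Icc_succ_top (by omega : 1 ≤ n + 1), hS0, ha, hpow]; ring
      have hS1' : ∑ i ∈ Icc 1 (n + 1), (n + 1 + 1 - i) * a i = 6 * 3 ^ (n + 1 - 3) := by
        rw [Finset.sum_Icc_succ_top (by omega : 1 ≤ n + 1)]
        have : ∑ i ∈ Icc 1 n, (n + 1 + 1 - i) * a i
            = ∑ i ∈ Icc 1 n, ((n + 1 - i) * a i + a i) := by
          refine Finset.sum_congr rfl fun i hi => ?_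
          simp only [Finset.mem_Icc] at hi
          rw [show n + 1 + 1 - i = (n + 1 - i) + 1 from by omega]; ring
        rw [this, Finset.sum_add_distrib, hS0, hS1, ha, hpow,
          show n + 1 + 1 - (n + 1) = 1 from by omega]
        ring
      have hS2' : ∑ i ∈ Icc 1 (n + 1), (n + 1 + 1 - i) ^ 2 * a i
          = 12 * 3 ^ (n + 1 - 3) := by
        rw [Finset.sum_Icc_succ_top (by omega : 1 ≤ n + 1)]
        have : ∑ i ∈ Icc 1 n, (n + 1 + 1 - i) ^ 2 * a i
            = ∑ i ∈ Icc 1 n, ((n + 1 - i) ^ 2 * a i + 2 * ((n + 1 - i) * a i) + a i) := by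
          refine Finset.sum_congr rfl fun i hi => ?_
          simp only [Finset.mem_Icc] at hi
          rw [show n + 1 + 1 - i = (n + 1 - i) + 1 from by omega]; ring
        rw [this, Finset.sum_add_distrib, Finset.sum_add_distrib, hS0, ← Finset.mul_sum, hS1, hS2, ha, hpow,
          show n + 1 + 1 - (n + 1) = 1 from by omega]
        ring
      have ha' := habs (n + 1) (by omega)
      refine ⟨hS0', hS1', hS2', ?_⟩
      rw [hS0', hS2', hpow] at ha'
      omega
  exact ⟨h2, h3, fun n hn => (key n hn).2.2.2⟩
end

section
/- Define a_1 = 1, a_{n+1} = Σ_{i=1}^{n} binom(n-i+2, 2) a_i. Then a_2 = 1, a_3 = 4, a_4 = 13, and for all n ≥ 3, a_{n+2} = 4 a_{n+1} - 3 a_n + a_{n-1}. Moreover a_{n+1} = Σ_{i=0}^{n} binom(n+2i-1, n-i) for all n ≥ 1. -/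
open Finset

lemma hstick (a M : ℕ) : ∑ m ∈ range (M+1), (a+m).choose m = (a+M+1).choose M := by
  induction M with
  | zero => simp
  | succ M ih =>
    rw [sum_range_succ, ih, show a+(M+1) = a+M+1 from by ring]
    exact (Nat.choose_succ_succ (a+M+1) M).symm

lemma vand (b : ℕ) : ∀ a M : ℕ, ∑ m ∈ range (M+1), (a+m).choose m * (b + (M - m)).choose (M-m) = (a+b+M+1).choose M := by
  induction b with
  | zero =>
    intro a M
    simp [Nat.choose_self, hstick]
  | succ b ih =>
    intro a M
    induction M with
    | zero => simp
    | succ M ihM =>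
      rw [sum_range_succ]
      have key : ∀ m ∈ range (M+1),
          (a+m).choose m * (b+1 + (M+1-m)).choose (M+1-m)
          = (a+m).choose m * (b+1 + (M-m)).choose (M-m)
            + (a+m).choose m * (b + (M+1-m)).choose (M+1-m) := by
        intro m hm
        simp only [mem_range] at hm
        have hch : (b+1 + (M+1-m)).choose (M+1-m)
            = (b+1 + (M-m)).choose (M-m) + (b + (M+1-m)).choose (M+1-m) := by
          have h3 : b + (M + 1 - m) = b + 1 + (M - m) := by omega
          rw [h3]
          have h1 : M + 1 - m = (M-m) + 1 := by omega
          rw [h1, show b+1+((M-m)+1) = (b+1+(M-m))+1 from by ring]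
          exact Nat.choose_succ_succ _ _
        rw [hch, Nat.mul_add]
      rw [sum_congr rfl key, sum_add_distrib, ihM]
      have e2 := ih a (M+1)
      rw [sum_range_succ] at e2
      simp only [Nat.sub_self, Nat.choose_zero_right, mul_one, Nat.add_zero] at e2 ⊢
      rw [show a+b+(M+1)+1 = a+(b+1)+M+1 from by ring] at e2
      have hp : (a+(b+1)+(M+1)+1).choose (M+1)
          = (a+(b+1)+M+1).choose M + (a+(b+1)+M+1).choose (M+1) := by
        rw [show a+(b+1)+(M+1)+1 = (a+(b+1)+M+1)+1 from by ring]
        exact Nat.choose_succ_succ _ _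
      omega

lemma tri_swap {M : Type*} [AddCommMonoid M] (f : ℕ → ℕ → M) :
    ∀ n, ∑ j ∈ range n, ∑ i ∈ range (j+1), f j i = ∑ i ∈ range n, ∑ j ∈ Ico i n, f j i := by
  intro n
  induction n with
  | zero => simp
  | succ n ih =>
    rw [sum_range_succ, ih]
    have h1 : ∀ i ∈ range (n+1), ∑ j ∈ Ico i (n+1), f j i = ∑ j ∈ Ico i n, f j i + f n i := by
      intro i hi
      simp only [mem_range] at hi
      exact sum_Ico_succ_top (by omega) _
    rw [sum_congr rfl h1, sum_add_distrib, sum_range_succ (fun i => ∑ j ∈ Ico i n, f j i)]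
    simp [Ico_self]

lemma inner_evalN (n i : ℕ) (hi : i < n) :
    ∑ m ∈ range (n - i), (n - (1+(i+m)) + 2).choose 2 * ((i+m) + 2*i - 1).choose ((i+m) - i)
    = (n + 2*(i+1) - 1).choose (n - (i+1)) := by
  rcases Nat.eq_zero_or_pos i with rfl | hipos
  · simp only [Nat.zero_add, Nat.mul_zero, Nat.add_zero, Nat.sub_zero]
    rw [Finset.sum_eq_single_of_mem 0 (mem_range.mpr (by omega))]
    · rw [show n - (1+0) + 2 = n+1 from by omega]
      rw [show (0:ℕ) - 1 = 0 from rfl, Nat.choose_zero_right, mul_one]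
      rw [show n + 2*(0+1) - 1 = n+1 from by omega, show n - (0+1) = (n+1) - 2 from by omega]
      exact (Nat.choose_symm (by omega)).symm
    · intro m hm hm0
      have hz : (m-1).choose m = 0 := Nat.choose_eq_zero_of_lt (by omega)
      rw [hz, mul_zero]
  · rw [show n - i = (n-1-i) + 1 from by omega]
    have key : ∀ m ∈ range ((n-1-i)+1),
        (n - (1+(i+m)) + 2).choose 2 * ((i+m) + 2*i - 1).choose ((i+m) - i)
        = ((3*i-1) + m).choose m * (2 + ((n-1-i) - m)).choose ((n-1-i) - m) := by
      intro m hm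
      simp only [mem_range] at hm
      rw [show n - (1+(i+m)) + 2 = 2 + ((n-1-i) - m) from by omega,
          show (i+m) + 2*i - 1 = (3*i-1) + m from by omega,
          show (i+m) - i = m from by omega]
      have hs := Nat.choose_symm (show 2 ≤ 2 + ((n-1-i)-m) by omega)
      rw [show 2 + ((n-1-i)-m) - 2 = (n-1-i)-m from by omega] at hs
      rw [← hs, mul_comm]
    rw [sum_congr rfl key, vand 2 (3*i-1) (n-1-i)]
    congr 1 <;> omega

def Bnat (n : ℕ) : ℕ := ∑ i ∈ range (n+1), (n + 2*i - 1).choose (n - i)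

lemma keyB (n : ℕ) (hn : 1 ≤ n) :
    ∑ k ∈ Icc 1 n, (n - k + 2).choose 2 * Bnat (k-1) = Bnat n := by
  rw [← Finset.Ico_add_one_right_eq_Icc, Finset.sum_Ico_eq_sum_range]
  rw [show n + 1 - 1 = n from rfl]
  have step1 : ∀ j ∈ range n,
      (n - (1+j) + 2).choose 2 * Bnat (1+j-1)
      = ∑ i ∈ range (j+1), (n - (1+j) + 2).choose 2 * ((j + 2*i - 1).choose (j - i)) := by
    intro j hj
    rw [show 1+j-1 = j from by omega, Bnat, mul_sum]
  rw [sum_congr rfl step1, tri_swap (fun j i => (n - (1+j) + 2).choose 2 * ((j + 2*i - 1).choose (j - i))) n]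
  have step2 : ∀ i ∈ range n,
      ∑ j ∈ Ico i n, (n - (1+j) + 2).choose 2 * ((j + 2*i - 1).choose (j - i))
      = (n + 2*(i+1) - 1).choose (n - (i+1)) := by
    intro i hi
    simp only [mem_range] at hi
    rw [Finset.sum_Ico_eq_sum_range]
    exact inner_evalN n i hi
  rw [sum_congr rfl step2, Bnat, sum_range_succ']
  rw [show n + 2*0 - 1 = n - 1 from by omega, Nat.choose_eq_zero_of_lt (by omega), Nat.add_zero]

section
variable (a : ℕ → ℤ)
  (hrec : ∀ n ≥ 1, a (n + 1) = ∑ i ∈ Finset.Icc 1 n, (Nat.choose (n - i + 2) 2 : ℤ) * a i)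

include hrec

lemma hA : ∀ n, 1 ≤ n → a (n+2) = 2 * a (n+1) + ∑ i ∈ Icc 1 n, ((n+2-i : ℕ) : ℤ) * a i := by
  intro n hn
  have h := hrec (n+1) (by omega)
  rw [Finset.sum_Icc_succ_top (by omega : 1 ≤ n+1)] at h
  rw [show n+1-(n+1)+2 = 2 from by omega] at h
  have hsplit : ∀ i ∈ Icc 1 n, ((n+1-i+2).choose 2 : ℤ) * a i
      = ((n-i+2).choose 2 : ℤ) * a i + ((n+2-i : ℕ) : ℤ) * a i := by
    intro i hi
    simp only [mem_Icc] at hi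
    have e : n+1-i+2 = (n-i+2)+1 := by omega
    have hp : ((n-i+2)+1).choose 2 = (n-i+2).choose 1 + (n-i+2).choose 2 :=
      Nat.choose_succ_succ (n-i+2) 1
    rw [e, hp, Nat.choose_one_right, show n-i+2 = n+2-i from by omega]
    push_cast
    ring
  rw [sum_congr rfl hsplit, sum_add_distrib, ← hrec n hn] at h
  rw [h]
  norm_num
  ring

lemma hS1 : ∀ n, 1 ≤ n → a (n+3) = 3 * a (n+2) + ∑ i ∈ Icc 1 n, a i := by
  intro n hn
  have h1 := hA a hrec (n+1) (by omega)
  rw [Finset.sum_Icc_succ_top (by omega : 1 ≤ n+1)] at h1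
  rw [show n+1+2-(n+1) = 2 from by omega] at h1
  have hsplit : ∀ i ∈ Icc 1 n, ((n+1+2-i : ℕ) : ℤ) * a i
      = ((n+2-i : ℕ) : ℤ) * a i + a i := by
    intro i hi
    simp only [mem_Icc] at hi
    rw [show n+1+2-i = (n+2-i)+1 from by omega]
    push_cast
    ring
  rw [sum_congr rfl hsplit, sum_add_distrib] at h1
  have h2 := hA a hrec n hn
  rw [show n+1+2 = n+3 from rfl, show n+1+1 = n+2 from rfl] at h1
  push_cast at h1
  linarith

lemma recA : ∀ n ≥ 3, a (n + 2) = 4 * a (n + 1) - 3 * a n + a (n - 1) := by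
  intro n hn
  obtain ⟨m, rfl⟩ : ∃ m, n = m + 2 := ⟨n - 2, by omega⟩
  have hm : 1 ≤ m := by omega
  have h1 := hS1 a hrec (m+1) (by omega)
  have h2 := hS1 a hrec m hm
  rw [Finset.sum_Icc_succ_top (by omega : 1 ≤ m+1)] at h1
  rw [show m+1+3 = m+2+2 from by omega, show m+1+2 = m+2+1 from by omega] at h1
  rw [show m+3 = m+2+1 from by omega] at h2
  rw [show m+2-1 = m+1 from by omega]
  linarith

end
theorem stmt_10 (a : ℕ → ℤ) (h1 : a 1 = 1)
    (hrec : ∀ n ≥ 1, a (n + 1) = ∑ i ∈ Finset.Icc 1 n, (Nat.choose (n - i + 2) 2 : ℤ) * a i) :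
    a 2 = 1 ∧ a 3 = 4 ∧ a 4 = 13 ∧
      (∀ n ≥ 3, a (n + 2) = 4 * a (n + 1) - 3 * a n + a (n - 1)) ∧
      ∀ n ≥ 1, a (n + 1) = ∑ i ∈ Finset.range (n + 1), (Nat.choose (n + 2 * i - 1) (n - i) : ℤ) := by
  have ha2 : a 2 = 1 := by
    have h := hrec 1 (by norm_num)
    rw [Finset.Icc_self, Finset.sum_singleton] at h
    norm_num [h1] at h
    exact h
  have ha3 : a 3 = 4 := by
    have h := hrec 2 (by norm_num)
    rw [show Finset.Icc 1 2 = {1, 2} from rfl, Finset.sum_insert (by decide),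
        Finset.sum_singleton] at h
    norm_num [h1, ha2] at h
    exact h
  have ha4 : a 4 = 13 := by
    have h := hrec 3 (by norm_num)
    rw [show Finset.Icc 1 3 = {1, 2, 3} from rfl, Finset.sum_insert (by decide),
        Finset.sum_insert (by decide), Finset.sum_singleton] at h
    norm_num [h1, ha2, ha3] at h
    exact h
  have hcf : ∀ n, a (n+1) = (Bnat n : ℤ) := by
    intro n
    induction n using Nat.strong_induction_on with
    | _ n ih =>
      rcases Nat.eq_zero_or_pos n with rfl | hn
      · rw [h1]
        decide
      · rw [hrec n hn]
        have hsub : ∀ i ∈ Finset.Icc 1 n, ((n-i+2).choose 2 : ℤ) * a i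
            = (((n-i+2).choose 2 * Bnat (i-1) : ℕ) : ℤ) := by
          intro i hi
          simp only [Finset.mem_Icc] at hi
          have hai : a i = (Bnat (i-1) : ℤ) := by
            have h := ih (i-1) (by omega)
            rwa [show i-1+1 = i from by omega] at h
          rw [hai]
          push_cast
          ring
        rw [Finset.sum_congr rfl hsub, ← Nat.cast_sum, keyB n hn]
  refine ⟨ha2, ha3, ha4, recA a hrec, ?_⟩
  intro n _
  rw [hcf n, Bnat]
  push_cast
  rfl
end

section
/- Let k, p, m be nonnegative integers with m ≥ 1, set b_i = k + p m^{i-1}, and define a_1 = 1, a_{n+1} = Σ_{i=1}^{n} b_{n+1-i} a_i. Then a_2 = k+p, a_3 = k + pm + (k+p)^2, and for all n ≥ 2, a_{n+2} = (k+m+p+1) a_{n+1} - (km+m+p) a_n. -/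
theorem stmt_11 (k p m : ℕ) (hm : m ≥ 1) (a : ℕ → ℤ) (h1 : a 1 = 1)
    (hrec : ∀ n ≥ 1, a (n + 1) = ∑ i ∈ Finset.Icc 1 n, ((k + p * m ^ (n - i) : ℕ) : ℤ) * a i) :
    a 2 = k + p ∧ a 3 = (k : ℤ) + p * m + ((k : ℤ) + p) ^ 2 ∧
      ∀ n ≥ 2, a (n + 2) = ((k : ℤ) + m + p + 1) * a (n + 1) - ((k : ℤ) * m + m + p) * a n := by
  have ha2 : a 2 = (k : ℤ) + p := by
    have := hrec 1 le_rfl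
    simp only [Finset.Icc_self, Finset.sum_singleton] at this
    rw [this, h1]
    push_cast
    ring
  have ha3 : a 3 = (k : ℤ) + p * m + ((k : ℤ) + p) ^ 2 := by
    have := hrec 2 (by norm_num)
    have hset : Finset.Icc 1 2 = {1, 2} := by decide
    rw [hset] at this
    rw [show (3 : ℕ) = 2 + 1 from rfl, this]
    simp [h1, ha2]
    push_cast
    ring
  have key : ∀ n ≥ 1, a (n + 2) = ((k : ℤ) + m + p) * a (n + 1)
      + ((k : ℤ) - k * m) * ∑ i ∈ Finset.Icc 1 n, a i := by
    intro n hn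
    have hsum : ∑ i ∈ Finset.Icc 1 n, ((k + p * m ^ (n + 1 - i) : ℕ) : ℤ) * a i
        = (m : ℤ) * (∑ i ∈ Finset.Icc 1 n, ((k + p * m ^ (n - i) : ℕ) : ℤ) * a i)
          + ((k : ℤ) - k * m) * ∑ i ∈ Finset.Icc 1 n, a i := by
      rw [Finset.mul_sum, Finset.mul_sum, ← Finset.sum_add_distrib]
      apply Finset.sum_congr rfl
      intro i hi
      have hin : 1 ≤ i ∧ i ≤ n := by simpa [Finset.mem_Icc] using hi
      have h2 : n + 1 - i = (n - i) + 1 := by omega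
      push_cast
      rw [h2, pow_succ]
      ring
    have h := hrec (n + 1) (by omega)
    rw [Finset.sum_Icc_succ_top (by omega : 1 ≤ n + 1)] at h
    simp only [Nat.sub_self, pow_zero, mul_one] at h
    rw [show n + 2 = n + 1 + 1 from rfl, h, hsum, ← hrec n hn]
    push_cast
    ring
  refine ⟨ha2, ha3, ?_⟩
  intro n hn
  obtain ⟨j, rfl⟩ : ∃ j, n = j + 1 := ⟨n - 1, by omega⟩
  have hA := key (j + 1) (by omega)
  have hB := key j (by omega)
  have hs : ∑ i ∈ Finset.Icc 1 (j + 1), a i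
      = (∑ i ∈ Finset.Icc 1 j, a i) + a (j + 1) :=
    Finset.sum_Icc_succ_top (by omega) a
  linear_combination hA + ((k : ℤ) - k * m) * hs - hB
end

section
/- Define a_1 = 1, a_{n+1} = Σ_{i=1}^{n} (2^{n-i} - 1) a_i. Then a_{n+1} = F_{2n-2} for all n ≥ 1, where F denotes the Fibonacci numbers with F_0 = 0. -/
theorem stmt_13 (a : ℕ → ℕ) (h1 : a 1 = 1)
    (hrec : ∀ n ≥ 1, a (n + 1) = ∑ i ∈ Finset.Icc 1 n, (2 ^ (n - i) - 1) * a i) :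
    ∀ n ≥ 1, a (n + 1) = Nat.fib (2 * n - 2) := by
  have step : ∀ n ≥ 1, a (n + 2) = 2 * a (n + 1) + ∑ i ∈ Finset.Icc 1 n, a i := by
    intro n hn
    have h2 := hrec (n + 1) (by omega)
    rw [show n + 1 + 1 = n + 2 from rfl] at h2
    rw [h2, Finset.sum_Icc_succ_top (by omega : 1 ≤ n + 1)]
    have hcong : ∀ i ∈ Finset.Icc 1 n, (2 ^ (n + 1 - i) - 1) * a i
        = 2 * ((2 ^ (n - i) - 1) * a i) + a i := by
      intro i hi
      simp only [Finset.mem_Icc] at hi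
      have h3 : n + 1 - i = (n - i) + 1 := by omega
      have h4 : 1 ≤ 2 ^ (n - i) := Nat.one_le_two_pow
      rw [h3, pow_succ]
      have h5 : 2 ^ (n - i) * 2 - 1 = 2 * (2 ^ (n - i) - 1) + 1 := by omega
      rw [h5]; ring
    rw [Finset.sum_congr rfl hcong, Finset.sum_add_distrib, ← Finset.mul_sum,
        ← hrec n hn]
    simp
  have main : ∀ n, 1 ≤ n → a (n + 1) = Nat.fib (2 * n - 2) ∧
      (2 ≤ n → (∑ i ∈ Finset.Icc 1 n, a i) = Nat.fib (2 * n - 3)) := by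
    intro n
    induction n with
    | zero => omega
    | succ m ih =>
      intro _
      rcases Nat.lt_or_ge m 1 with hm | hm
      · -- m = 0, n = 1 : a 2 = fib 0 = 0
        interval_cases m
        refine ⟨?_, by omega⟩
        have := hrec 1 le_rfl
        simp at this
        simpa using this
      · obtain ⟨hS, hT⟩ := ih hm
        rcases Nat.lt_or_ge m 2 with hm2 | hm2
        · -- m = 1, n = 2
          interval_cases m
          have ha2 : a 2 = 0 := by simpa using hS
          constructor
          · have := step 1 le_rfl
            simp [ha2, h1] at this
            simpa using this
          · intro _
            rw [show (2:ℕ) = 1 + 1 from rfl, Finset.sum_Icc_succ_top (by norm_num)]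
            simp [h1, ha2]
        · have hT' := hT hm2
          have hsum : (∑ i ∈ Finset.Icc 1 (m + 1), a i)
              = (∑ i ∈ Finset.Icc 1 m, a i) + a (m + 1) :=
            Finset.sum_Icc_succ_top (by omega) a
          constructor
          · rw [step m hm, hS, hT']
            obtain ⟨k, hk⟩ : ∃ k, m = k + 2 := ⟨m - 2, by omega⟩
            subst hk
            have e1 : 2 * (k + 2 + 1) - 2 = (2 * k + 1) + 1 + 1 + 1 := by omega
            have e2 : 2 * (k + 2) - 2 = (2 * k + 1) + 1 := by omega
            have e3 : 2 * (k + 2) - 3 = 2 * k + 1 := by omega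
            rw [e1, e2, e3]
            generalize 2 * k + 1 = j
            simp only [show ∀ j:ℕ, j+1+1+1+1 = (j+1+1)+2 from fun _ => rfl,
              show ∀ j:ℕ, j+1+1 = j+2 from fun _ => rfl, Nat.fib_add_two]
            ring
          · intro _
            rw [hsum, hS, hT']
            obtain ⟨k, hk⟩ : ∃ k, m = k + 2 := ⟨m - 2, by omega⟩
            subst hk
            have e1 : 2 * (k + 2 + 1) - 3 = (2 * k + 1) + 1 + 1 := by omega
            have e2 : 2 * (k + 2) - 2 = (2 * k + 1) + 1 := by omega
            have e3 : 2 * (k + 2) - 3 = 2 * k + 1 := by omega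
            rw [e1, e2, e3]
            generalize 2 * k + 1 = j
            simp only [show ∀ j:ℕ, j+1+1+1 = (j+1)+2 from fun _ => rfl,
              show ∀ j:ℕ, j+1+1 = j+2 from fun _ => rfl, Nat.fib_add_two]
  intro n hn
  exact (main n hn).1
end

section
/- Define a_1 = 1, a_{n+1} = Σ_{i=1}^{n} ⌊(n+1-i)/2⌋ a_i. Then a_2 = 0, a_3 = a_4 = 1, and for all n ≥ 3, a_{n+3} = a_{n+2} + 2 a_{n+1} - a_n. -/
theorem stmt_14 (a : ℕ → ℤ) (h1 : a 1 = 1)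
    (hrec : ∀ n ≥ 1, a (n + 1) = ∑ i ∈ Finset.Icc 1 n, (((n + 1 - i) / 2 : ℕ) : ℤ) * a i) :
    a 2 = 0 ∧ a 3 = 1 ∧ a 4 = 1 ∧
      ∀ n ≥ 3, a (n + 3) = a (n + 2) + 2 * a (n + 1) - a n := by
  have h2 : a 2 = 0 := by
    have := hrec 1 (by norm_num)
    simpa using this
  have h3 : a 3 = 1 := by
    have := hrec 2 (by norm_num)
    rw [show Finset.Icc 1 2 = {1, 2} by decide] at this
    simp [h1, h2] at this
    simpa using this
  have h4 : a 4 = 1 := by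
    have := hrec 3 (by norm_num)
    rw [show Finset.Icc 1 3 = {1, 2, 3} by decide] at this
    simp [h1, h2, h3] at this
    simpa using this
  have key : ∀ k : ℕ, a (k + 4) = a (k + 2) + ∑ i ∈ Finset.Icc 1 (k + 2), a i := by
    intro k
    have hA := hrec (k + 3) (by omega)
    have hB := hrec (k + 1) (by omega)
    rw [show k + 3 + 1 = k + 4 by ring] at hA
    rw [show k + 1 + 1 = k + 2 by ring] at hB
    rw [hA, hB]
    rw [Finset.sum_Icc_succ_top (by omega : 1 ≤ k + 3),
        Finset.sum_Icc_succ_top (by omega : 1 ≤ k + 2),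
        Finset.sum_Icc_succ_top (by omega : 1 ≤ k + 2)]
    have c1 : ((k + 4 - (k + 3)) / 2 : ℕ) = 0 := by omega
    have c2 : ((k + 4 - (k + 2)) / 2 : ℕ) = 1 := by omega
    rw [c1, c2]
    have hsum : ∑ i ∈ Finset.Icc 1 (k + 1), (((k + 4 - i) / 2 : ℕ) : ℤ) * a i
        = ∑ i ∈ Finset.Icc 1 (k + 1), ((((k + 2 - i) / 2 : ℕ) : ℤ) * a i + a i) := by
      apply Finset.sum_congr rfl
      intro i hi
      simp only [Finset.mem_Icc] at hi
      have : ((k + 4 - i) / 2 : ℕ) = (k + 2 - i) / 2 + 1 := by omega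
      rw [this]
      push_cast
      ring
    rw [hsum, Finset.sum_add_distrib]
    push_cast
    ring
  refine ⟨h2, h3, h4, ?_⟩
  intro n hn
  obtain ⟨k, rfl⟩ : ∃ k, n = k + 3 := ⟨n - 3, by omega⟩
  have e1 := key (k + 2)
  have e2 := key (k + 1)
  have hS := Finset.sum_Icc_succ_top (by omega : (1:ℕ) ≤ k + 3 + 1) a
  ring_nf at e1 e2 hS ⊢
  linarith
end

section
/- Define a_1 = 1, a_{n+1} = Σ_{i=1}^{n} ⌈(n+1-i)/2⌉ a_i. Then a_2 = 1, a_3 = 2, a_4 = 5, and for all n ≥ 3, a_{n+3} = 2 a_{n+2} + a_{n+1} - a_n. -/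
lemma key_15 (a : ℕ → ℤ)
    (hrec : ∀ n ≥ 1, a (n + 1) = ∑ i ∈ Finset.Icc 1 n, (((n + 2 - i) / 2 : ℕ) : ℤ) * a i) :
    ∀ n ≥ 1, a (n + 3) = a (n + 1) + ∑ i ∈ Finset.Icc 1 (n + 2), a i := by
  intro n hn
  have e1 : a (n + 3) = ∑ i ∈ Finset.Icc 1 (n + 2), (((n + 2 + 2 - i) / 2 : ℕ) : ℤ) * a i :=
    hrec (n + 2) (by omega)
  have e2 := hrec n hn
  have h3 : ∑ i ∈ Finset.Icc 1 (n + 2), (((n + 2 - i) / 2 : ℕ) : ℤ) * a i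
      = ∑ i ∈ Finset.Icc 1 n, (((n + 2 - i) / 2 : ℕ) : ℤ) * a i := by
    rw [Finset.sum_Icc_succ_top (by omega : 1 ≤ n + 2),
        Finset.sum_Icc_succ_top (by omega : 1 ≤ n + 1)]
    have t1 : n + 2 - (n + 1) = 1 := by omega
    have t2 : n + 2 - (n + 2) = 0 := by omega
    rw [t1, t2]
    norm_num
  have h4 : ∑ i ∈ Finset.Icc 1 (n + 2), (((n + 2 + 2 - i) / 2 : ℕ) : ℤ) * a i
      = ∑ i ∈ Finset.Icc 1 (n + 2), ((((n + 2 - i) / 2 : ℕ) : ℤ) * a i + a i) := by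
    apply Finset.sum_congr rfl
    intro i hi
    simp only [Finset.mem_Icc] at hi
    have hd : (n + 2 + 2 - i) / 2 = (n + 2 - i) / 2 + 1 := by omega
    rw [hd]
    push_cast
    ring
  rw [e1, h4, Finset.sum_add_distrib, h3, ← e2]

theorem stmt_15 (a : ℕ → ℤ) (h1 : a 1 = 1)
    (hrec : ∀ n ≥ 1, a (n + 1) = ∑ i ∈ Finset.Icc 1 n, (((n + 2 - i) / 2 : ℕ) : ℤ) * a i) :
    a 2 = 1 ∧ a 3 = 2 ∧ a 4 = 5 ∧
      ∀ n ≥ 3, a (n + 3) = 2 * a (n + 2) + a (n + 1) - a n := by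
  have h2 : a 2 = 1 := by
    have := hrec 1 (by norm_num)
    simpa [h1] using this
  have h3 : a 3 = 2 := by
    have := hrec 2 (by norm_num)
    rw [this]
    rw [show Finset.Icc 1 2 = {1, 2} from rfl]
    norm_num [h1, h2]
  have h4 : a 4 = 5 := by
    have := hrec 3 (by norm_num)
    rw [this]
    rw [show Finset.Icc 1 3 = {1, 2, 3} from rfl]
    norm_num [h1, h2, h3]
  refine ⟨h2, h3, h4, ?_⟩
  intro n hn
  obtain ⟨m, rfl⟩ : ∃ m, n = m + 2 := ⟨n - 2, by omega⟩
  have k1 := key_15 a hrec (m + 2) (by omega)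
  have k2 := key_15 a hrec (m + 1) (by omega)
  have hs : ∑ i ∈ Finset.Icc 1 (m + 4), a i = ∑ i ∈ Finset.Icc 1 (m + 3), a i + a (m + 4) := by
    rw [Finset.sum_Icc_succ_top (by omega : 1 ≤ m + 4)]
  have : m + 2 + 2 = m + 4 := by omega
  rw [this] at k1
  have : m + 1 + 2 = m + 3 := by omega
  rw [this] at k2
  have : m + 2 + 3 = m + 5 := by omega
  rw [this] at k1
  have : m + 1 + 3 = m + 4 := by omega
  rw [this] at k2
  show a (m + 5) = 2 * a (m + 4) + a (m + 3) - a (m + 2)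
  rw [k1, hs]
  linarith [k2]
end

section
/- Let p, q be nonnegative integers, set b_1 = p and b_i = q for i ≥ 2, and define a_1 = 1, a_{n+1} = Σ_{i=1}^{n} b_{n+1-i} a_i. Then a_2 = p, a_3 = p^2 + q, and for all n ≥ 2, a_{n+2} = (1+p) a_{n+1} + (q-p) a_n. -/
theorem stmt_16 (p q : ℕ) (b : ℕ → ℕ) (hb1 : b 1 = p) (hb : ∀ i ≥ 2, b i = q)
    (a : ℕ → ℤ) (h1 : a 1 = 1)
    (hrec : ∀ n ≥ 1, a (n + 1) = ∑ i ∈ Finset.Icc 1 n, (b (n + 1 - i) : ℤ) * a i) :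
    a 2 = p ∧ a 3 = (p : ℤ) ^ 2 + q ∧
      ∀ n ≥ 2, a (n + 2) = (1 + (p : ℤ)) * a (n + 1) + ((q : ℤ) - p) * a n := by
  have h2 : a 2 = p := by
    have h := hrec 1 le_rfl
    simp [hb1, h1] at h
    simpa using h
  have key : ∀ m : ℕ, a (m + 3) = p * a (m + 2) + q * ∑ i ∈ Finset.Icc 1 (m + 1), a i := by
    intro m
    have h := hrec (m + 2) (by omega)
    rw [show m + 2 + 1 = m + 3 by ring] at h
    rw [h, Finset.sum_Icc_succ_top (by omega : 1 ≤ m + 2)]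
    have hb' : ∀ i ∈ Finset.Icc 1 (m + 1), (b (m + 3 - i) : ℤ) * a i = q * a i := by
      intro i hi
      simp only [Finset.mem_Icc] at hi
      rw [hb (m + 3 - i) (by omega)]
    rw [Finset.sum_congr rfl hb', show m + 3 - (m + 2) = 1 by omega, hb1, Finset.mul_sum]
    ring
  have h3 : a 3 = (p : ℤ) ^ 2 + q := by
    have h := key 0
    simp [h2, h1] at h
    rw [h]; ring
  refine ⟨h2, h3, ?_⟩
  intro n hn
  obtain ⟨m, rfl⟩ : ∃ m, n = m + 2 := ⟨n - 2, by omega⟩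
  have k1 := key m
  have k2 := key (m + 1)
  rw [Finset.sum_Icc_succ_top (by omega : 1 ≤ m + 1 + 1)] at k2
  have : (m + 2) + 2 = (m + 1) + 3 := by ring
  rw [this, k2]
  have : (m + 1) + 2 = m + 3 := by ring
  rw [this]
  have e : (q : ℤ) * ∑ i ∈ Finset.Icc 1 (m + 1), a i = a (m + 3) - p * a (m + 2) := by
    rw [k1]; ring
  rw [mul_add, e]
  ring
end

section
/- Let p, q be nonnegative integers and set b_i = p for odd i, b_i = q for even i; define a_1 = 1, a_{n+1} = Σ_{i=1}^{n} b_{n+1-i} a_i. Then a_2 = p, a_3 = p^2 + q, and for all n ≥ 2, a_{n+2} = p a_{n+1} + (1+q) a_n. In particular, for p = 1, q = 0, a_{n+1} = F_n (the number of compositions of n into odd parts is F_n). -/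
theorem stmt_18 (p q : ℕ) (b : ℕ → ℕ)
    (hbodd : ∀ i, Odd i → b i = p) (hbeven : ∀ i, Even i → b i = q)
    (a : ℕ → ℤ) (h1 : a 1 = 1)
    (hrec : ∀ n ≥ 1, a (n + 1) = ∑ i ∈ Finset.Icc 1 n, (b (n + 1 - i) : ℤ) * a i) :
    a 2 = p ∧ a 3 = (p : ℤ) ^ 2 + q ∧
      (∀ n ≥ 2, a (n + 2) = (p : ℤ) * a (n + 1) + (1 + (q : ℤ)) * a n) ∧
      (p = 1 → q = 0 → ∀ n ≥ 1, a (n + 1) = Nat.fib n) := by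
  have hb1 : b 1 = p := hbodd 1 (by decide)
  have hb2 : b 2 = q := hbeven 2 (by decide)
  have ha2 : a 2 = (p : ℤ) := by
    have := hrec 1 le_rfl
    simpa [hb1, h1] using this
  have ha3 : a 3 = (p : ℤ) ^ 2 + q := by
    have := hrec 2 (by norm_num)
    rw [show Finset.Icc 1 2 = {1, 2} from rfl] at this
    simp [Finset.sum_insert, hb1, hb2, h1, ha2] at this
    rw [this]; ring
  have hshift : ∀ k, b (k + 2) = b k := by
    intro k
    rcases Nat.even_or_odd k with hk | hk
    · rw [hbeven _ hk, hbeven (k + 2) (by exact hk.add (by decide))]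
    · rw [hbodd _ hk, hbodd (k + 2) (by exact hk.add_even (by decide))]
  have hmain : ∀ n ≥ 2, a (n + 2) = (p : ℤ) * a (n + 1) + (1 + (q : ℤ)) * a n := by
    intro n hn
    obtain ⟨m, rfl⟩ : ∃ m, n = m + 2 := ⟨n - 2, by omega⟩
    have h2 := hrec (m + 3) (by omega)
    rw [show m + 3 = (m + 2) + 1 from rfl, Finset.sum_Icc_succ_top (by omega),
      show m + 2 = (m + 1) + 1 from rfl, Finset.sum_Icc_succ_top (by omega)] at h2
    have hsum : ∑ i ∈ Finset.Icc 1 (m + 1), ((b (m + 3 + 1 - i) : ℤ)) * a i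
        = ∑ i ∈ Finset.Icc 1 (m + 1), ((b (m + 1 + 1 - i) : ℤ)) * a i := by
      apply Finset.sum_congr rfl
      intro i hi
      simp only [Finset.mem_Icc] at hi
      have : m + 3 + 1 - i = (m + 1 + 1 - i) + 2 := by omega
      rw [this, hshift]
    rw [hsum, ← hrec (m + 1) (by omega)] at h2
    have e1 : m + 3 + 1 - (m + 1 + 1) = 2 := by omega
    have e2 : m + 3 + 1 - (m + 2 + 1) = 1 := by omega
    rw [e1, e2, hb1, hb2] at h2
    rw [show m + 2 + 2 = m + 3 + 1 from rfl, h2]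
    ring_nf
  refine ⟨ha2, ha3, hmain, ?_⟩
  intro hp hq
  subst hp hq
  have key : ∀ n, 1 ≤ n → a (n + 1) = Nat.fib n ∧ a (n + 2) = Nat.fib (n + 1) := by
    intro n hn
    induction n, hn using Nat.le_induction with
    | base => constructor <;> simp [ha2, ha3]
    | succ n hn ih =>
      refine ⟨ih.2, ?_⟩
      have := hmain (n + 1) (by omega)
      rw [this, ih.1, ih.2, Nat.fib_add_two]
      push_cast
      ring
  exact fun n hn => (key n hn).1
end
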